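/- Let 𝒯* ⊆ 𝒯 be an r-test set with m* = |𝒯*| ≥ 2, let #_B ≥ 1 be the number of item pairs with ⊥(a,𝒯*) = r, let #₀ = r·n(n−1)/2, and let k = (r/(r+1))·m*·ln((r+1)·#₀/#_B). Define the potential function f(T̄) = (#(T̄) − (r/(r+1))·#_B)·(1 − (r+1)/(r·m*))^{k − |T̄|} for partial families T̄ ⊆ 𝒯. Then for every partial family T̄ ⊆ 𝒯 with #(T̄) > 0, there exists T ∈ 𝒯 \ T̄ with f(T̄ ∪ {T}) ≤ f(T̄); in particular, min_{T ∈ 𝒯 \ T̄} f(T̄ ∪ {T}) ≤ f(T̄). -/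
import Mathlib


open Finset

/-- The set of item pairs: 2-element subsets of the item set `S` (here the whole type `α`). -/
def itemPairs (α : Type*) [Fintype α] [DecidableEq α] : Finset (Finset α) :=
  Finset.univ.filter fun a => a.card = 2

/-- `⊥(a, F)`: the number of tests in the family `F` that differentiate the item pair `a`,
i.e. the tests `T` with `|T ∩ a| = 1`. -/
def diffBy {α : Type*} [DecidableEq α] (a : Finset α) (F : Finset (Finset α)) : ℕ :=
  (F.filter fun T => (T ∩ a).card = 1).card

/-- `F` is an `r`-test set for the collection `𝒯`: `F ⊆ 𝒯` and every item pair is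
differentiated by at least `r` tests of `F`. -/
def IsRTestSet {α : Type*} [Fintype α] [DecidableEq α]
    (r : ℕ) (𝒯 F : Finset (Finset α)) : Prop :=
  F ⊆ 𝒯 ∧ ∀ a ∈ itemPairs α, r ≤ diffBy a F

/-- The differentiation measure `#(T̄) = ∑_a max (r - ⊥(a,T̄), 0)` (truncated subtraction). -/
def dmeasure {α : Type*} [Fintype α] [DecidableEq α]
    (r : ℕ) (F : Finset (Finset α)) : ℕ :=
  ∑ a ∈ itemPairs α, (r - diffBy a F)

/-- A run of the set cover greedy algorithm SGA: a sequence of distinct tests from `𝒯`,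
each chosen greedily to minimize the differentiation measure of the selected family,
selections continue while the measure is positive, and the final measure is `0`. -/
structure SGARun {α : Type*} [Fintype α] [DecidableEq α]
    (r : ℕ) (𝒯 : Finset (Finset α)) (L : List (Finset α)) : Prop where
  nodup : L.Nodup
  mem : ∀ T ∈ L, T ∈ 𝒯
  greedy : ∀ i : Fin L.length, ∀ T ∈ 𝒯, T ∉ (L.take i).toFinset →
      dmeasure r (insert (L.get i) (L.take i).toFinset) ≤
        dmeasure r (insert T (L.take i).toFinset)
  pos : ∀ i < L.length, 0 < dmeasure r (L.take i).toFinset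
  done : dmeasure r L.toFinset = 0

section Hermite
open Polynomial Finset


namespace HermiteAux

noncomputable def P (s n : ℕ) : ℤ[X] := (C (s:ℤ) - X) ^ n * X ^ n

lemma coeff_P_eq_zero (s n j : ℕ) (hj : j < n) : (P s n).coeff j = 0 := by
  rw [P, coeff_mul_X_pow', if_neg (by omega)]

lemma dvd_eval_zero (s n j : ℕ) : ((Nat.factorial n : ℕ) : ℤ) ∣ (derivative^[j] (P s n)).eval 0 := by
  rw [← coeff_zero_eq_eval_zero, coeff_iterate_derivative]
  simp only [zero_add, Nat.descFactorial_self, nsmul_eq_mul]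
  rcases lt_or_ge j n with h | h
  · simp [coeff_P_eq_zero s n j h]
  · exact Dvd.dvd.mul_right (Int.natCast_dvd_natCast.mpr (Nat.factorial_dvd_factorial h)) _

lemma P_comp (s n : ℕ) : (P s n).comp (C (s:ℤ) - X) = P s n := by
  simp [P, mul_comp, pow_comp, sub_comp, C_comp, X_comp]
  ring

lemma iterate_derivative_comp_aux (s : ℕ) (p : ℤ[X]) (k : ℕ) :
    derivative^[k] (p.comp (C (s:ℤ) - X)) = (-1) ^ k * (derivative^[k] p).comp (C (s:ℤ) - X) := by
  induction' k with k ih generalizing p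
  · simp
  · rw [Function.iterate_succ_apply, derivative_comp]
    simp only [derivative_sub, derivative_C, derivative_X, zero_sub, Function.iterate_succ_apply]
    rw [show (-1 : ℤ[X]) * (derivative p).comp (C (s:ℤ) - X) = -( (derivative p).comp (C (s:ℤ) - X)) by ring,
      iterate_derivative_neg, ih (derivative p)]
    ring

lemma eval_s (s n j : ℕ) :
    (derivative^[j] (P s n)).eval (s:ℤ) = (-1) ^ j * (derivative^[j] (P s n)).eval 0 := by
  conv_lhs => rw [← P_comp s n, iterate_derivative_comp_aux]
  simp [eval_comp]

lemma dvd_eval_s (s n j : ℕ) : ((Nat.factorial n : ℕ) : ℤ) ∣ (derivative^[j] (P s n)).eval (s:ℤ) := by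
  rw [eval_s]
  exact Dvd.dvd.mul_left (dvd_eval_zero s n j) _

noncomputable def G (s n : ℕ) : ℤ[X] := ∑ j ∈ range (2*n+1), (-1) ^ j * derivative^[j] (P s n)

lemma dvd_G_eval_zero (s n : ℕ) : ((Nat.factorial n : ℕ) : ℤ) ∣ (G s n).eval 0 := by
  rw [G, eval_finset_sum]
  exact dvd_sum fun j _ => by
    rw [eval_mul]
    exact Dvd.dvd.mul_left (dvd_eval_zero s n j) _

lemma dvd_G_eval_s (s n : ℕ) : ((Nat.factorial n : ℕ) : ℤ) ∣ (G s n).eval (s:ℤ) := by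
  rw [G, eval_finset_sum]
  exact dvd_sum fun j _ => by
    rw [eval_mul]
    exact Dvd.dvd.mul_left (dvd_eval_s s n j) _

lemma natDegree_P_le (s n : ℕ) : (P s n).natDegree ≤ 2*n := by
  refine (natDegree_mul_le).trans ?_
  have h1 : ((C (s:ℤ) - X) ^ n).natDegree ≤ n := by
    refine (natDegree_pow _ _).le.trans ?_
    have : (C (s:ℤ) - X).natDegree ≤ 1 :=
      (natDegree_sub_le _ _).trans (by simp)
    calc n * (C (s:ℤ) - X).natDegree ≤ n * 1 := Nat.mul_le_mul_left n this
      _ = n := by omega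
  have h2 : ((X : ℤ[X]) ^ n).natDegree ≤ n := by simp
  omega

lemma G_add_derivative (s n : ℕ) : G s n + derivative (G s n) = P s n := by
  have hz : derivative^[2*n+1] (P s n) = 0 :=
    iterate_derivative_eq_zero (by have := natDegree_P_le s n; omega)
  have : G s n + derivative (G s n)
      = ∑ j ∈ range (2*n+1),
        ((-1:ℤ[X]) ^ j * derivative^[j] (P s n) - (-1) ^ (j+1) * derivative^[j+1] (P s n)) := by
    rw [G, map_sum, ← sum_add_distrib]
    refine sum_congr rfl fun j _ => ?_
    rw [derivative_mul, Function.iterate_succ_apply']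
    have : derivative ((-1:ℤ[X]) ^ j) = 0 := by
      rw [show ((-1:ℤ[X]) ^ j) = C ((-1)^j) by simp, derivative_C]
    rw [this]
    ring
  rw [this, sum_range_sub' (fun j => (-1:ℤ[X]) ^ j * derivative^[j] (P s n)), hz]
  simp

end HermiteAux

namespace HermiteAux

open intervalIntegral

theorem exp_nat_not_rat (s a b : ℕ) (hs : 1 ≤ s) (hb : 1 ≤ b)
    (hab : (b:ℝ) * Real.exp s = a) : False := by
  have hsp : (0:ℝ) < (s:ℝ) := by exact_mod_cast hs
  have hbp : (0:ℝ) < (b:ℝ) := by exact_mod_cast hb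
  obtain ⟨n, hn⟩ : ∃ n : ℕ, (b:ℝ) * ((s:ℝ) * (((s:ℝ)^2) ^ n * Real.exp s)) <
      (Nat.factorial n : ℝ) := by
    have h0 := FloorSemiring.tendsto_pow_div_factorial_atTop (K := ℝ) ((s:ℝ)^2)
    have hCpos : (0:ℝ) < (b:ℝ) * (s:ℝ) * Real.exp s := by positivity
    obtain ⟨n, hn⟩ :=
      (h0.eventually (gt_mem_nhds (show (0:ℝ) < 1 / ((b:ℝ)*(s:ℝ)*Real.exp s) by positivity))).exists
    refine ⟨n, ?_⟩
    have hfp : (0:ℝ) < (Nat.factorial n : ℝ) := by positivity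
    rw [div_lt_div_iff₀ hfp hCpos] at hn
    nlinarith [hn]
  set PR : ℝ[X] := (P s n).map (Int.castRingHom ℝ) with hPR
  set GR : ℝ[X] := (G s n).map (Int.castRingHom ℝ) with hGR
  have hGP : derivative GR + GR = PR := by
    calc derivative GR + GR = (derivative (G s n) + G s n).map (Int.castRingHom ℝ) := by
          rw [Polynomial.map_add, derivative_map]
      _ = PR := by rw [add_comm, G_add_derivative]
  have hderiv : ∀ x : ℝ, HasDerivAt (fun y => GR.eval y * Real.exp y)
      (PR.eval x * Real.exp x) x := by
    intro x
    have h := (GR.hasDerivAt x).mul (Real.hasDerivAt_exp x)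
    have heq : (derivative GR).eval x * Real.exp x + GR.eval x * Real.exp x
        = PR.eval x * Real.exp x := by
      rw [← hGP, eval_add]; ring
    rwa [heq] at h
  have hint : IntervalIntegrable (fun x => PR.eval x * Real.exp x)
      MeasureTheory.volume 0 (s:ℝ) :=
    ((PR.continuous).mul Real.continuous_exp).intervalIntegrable _ _
  have hI : ∫ x in (0:ℝ)..(s:ℝ), PR.eval x * Real.exp x
      = GR.eval (s:ℝ) * Real.exp (s:ℝ) - GR.eval 0 * Real.exp 0 :=
    intervalIntegral.integral_eq_sub_of_hasDerivAt (fun x _ => hderiv x) hint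
  have hPReval : ∀ x : ℝ, PR.eval x = ((s:ℝ) - x)^n * x^n := by
    intro x
    simp [hPR, P, Polynomial.map_mul, Polynomial.map_pow, Polynomial.map_sub]
  have hIpos : 0 < ∫ x in (0:ℝ)..(s:ℝ), PR.eval x * Real.exp x := by
    apply intervalIntegral.intervalIntegral_pos_of_pos_on hint _ hsp
    intro x hx
    rw [hPReval]
    have h1 : 0 < x := hx.1
    have h2 : x < s := hx.2
    have h3 : 0 < (s:ℝ) - x := by linarith
    positivity
  have hIle : ∫ x in (0:ℝ)..(s:ℝ), PR.eval x * Real.exp x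
      ≤ (s:ℝ) * ((s:ℝ)^n * (s:ℝ)^n * Real.exp s) := by
    have hconst : ∫ _x in (0:ℝ)..(s:ℝ), ((s:ℝ)^n * (s:ℝ)^n * Real.exp s)
        = ((s:ℝ) - 0) • ((s:ℝ)^n * (s:ℝ)^n * Real.exp s) := intervalIntegral.integral_const _
    have hbnd : ∀ x ∈ Set.Icc (0:ℝ) (s:ℝ),
        PR.eval x * Real.exp x ≤ (s:ℝ)^n * (s:ℝ)^n * Real.exp s := by
      intro x hx
      rw [hPReval]
      obtain ⟨hx0, hxs⟩ := hx
      have h1 : ((s:ℝ) - x)^n ≤ (s:ℝ)^n := pow_le_pow_left₀ (by linarith) (by linarith) n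
      have h2 : x^n ≤ (s:ℝ)^n := pow_le_pow_left₀ hx0 hxs n
      have h3 : Real.exp x ≤ Real.exp s := Real.exp_le_exp.mpr hxs
      have h4 : (0:ℝ) ≤ ((s:ℝ) - x)^n := pow_nonneg (by linarith) n
      have h5 : (0:ℝ) ≤ x^n := pow_nonneg hx0 n
      have h6 : (0:ℝ) ≤ (s:ℝ)^n := pow_nonneg (le_of_lt hsp) n
      have hA : ((s:ℝ) - x)^n * x^n ≤ (s:ℝ)^n * (s:ℝ)^n := mul_le_mul h1 h2 h5 h6
      exact mul_le_mul hA h3 (Real.exp_nonneg x) (mul_nonneg h6 h6)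
    have hmono := intervalIntegral.integral_mono_on (μ := MeasureTheory.volume)
      (g := fun _ => (s:ℝ)^n * (s:ℝ)^n * Real.exp s) (le_of_lt hsp) hint
      intervalIntegrable_const hbnd
    calc _ ≤ _ := hmono
      _ = (s:ℝ) * ((s:ℝ)^n * (s:ℝ)^n * Real.exp s) := by rw [hconst]; simp
  have hGR0 : GR.eval 0 = (((G s n).eval 0 : ℤ) : ℝ) := by
    rw [hGR, eval_map, show (0:ℝ) = (Int.castRingHom ℝ) 0 by simp, eval₂_at_apply]
    simp
  have hGRs : GR.eval (s:ℝ) = (((G s n).eval (s:ℤ) : ℤ) : ℝ) := by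
    rw [hGR, eval_map, show ((s:ℕ):ℝ) = (Int.castRingHom ℝ) ((s:ℕ):ℤ) by simp, eval₂_at_apply]
    simp
  set e0 : ℤ := (G s n).eval 0 with he0
  set eS : ℤ := (G s n).eval (s:ℤ) with heS
  set M : ℤ := eS * a - e0 * b with hM
  have hbI : (b:ℝ) * (∫ x in (0:ℝ)..(s:ℝ), PR.eval x * Real.exp x) = (M:ℝ) := by
    rw [hI, hGR0, hGRs, Real.exp_zero]
    calc (b:ℝ) * ((eS:ℝ) * Real.exp (s:ℕ) - (e0:ℝ) * 1)
        = (eS:ℝ) * ((b:ℝ) * Real.exp (s:ℕ)) - (e0:ℝ) * (b:ℝ) := by ring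
      _ = (eS:ℝ) * (a:ℝ) - (e0:ℝ) * (b:ℝ) := by rw [hab]
      _ = (M:ℝ) := by rw [hM]; push_cast; ring
  have hMpos : 0 < M := by
    have := mul_pos hbp hIpos
    rw [hbI] at this
    exact_mod_cast this
  have hMdvd : ((Nat.factorial n : ℕ) : ℤ) ∣ M := by
    exact dvd_sub ((dvd_G_eval_s s n).mul_right _) ((dvd_G_eval_zero s n).mul_right _)
  have hMge : ((Nat.factorial n : ℕ) : ℤ) ≤ M := Int.le_of_dvd hMpos hMdvd
  have hMge' : ((Nat.factorial n : ℕ) : ℝ) ≤ (M:ℝ) := by exact_mod_cast hMge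
  have hfin : (b:ℝ) * (∫ x in (0:ℝ)..(s:ℝ), PR.eval x * Real.exp x)
      ≤ (b:ℝ) * ((s:ℝ) * ((s:ℝ)^n * (s:ℝ)^n * Real.exp s)) :=
    mul_le_mul_of_nonneg_left hIle (le_of_lt hbp)
  have hpow : ((s:ℝ)^2)^n = (s:ℝ)^n * (s:ℝ)^n := by ring
  rw [hbI] at hfin
  rw [hpow] at hn
  linarith

end HermiteAux

end Hermite


section CombAux

variable {α : Type*} [Fintype α] [DecidableEq α]

lemma diffBy_mono (a : Finset α) {F G : Finset (Finset α)} (h : F ⊆ G) :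
    diffBy a F ≤ diffBy a G :=
  Finset.card_le_card (Finset.filter_subset_filter _ h)

lemma diffBy_union_le (a : Finset α) (F G : Finset (Finset α)) :
    diffBy a (F ∪ G) ≤ diffBy a F + diffBy a G := by
  unfold diffBy
  rw [Finset.filter_union]
  exact Finset.card_union_le _ _

lemma diffBy_insert_eq (a : Finset α) (T : Finset α) (F : Finset (Finset α)) (hT : T ∉ F) :
    diffBy a (insert T F) = diffBy a F + (if (T ∩ a).card = 1 then 1 else 0) := by
  unfold diffBy
  rw [Finset.filter_insert]
  split_ifs with h
  · rw [Finset.card_insert_of_notMem (fun hmem => hT (Finset.mem_filter.mp hmem).1)]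
  · rw [add_zero]

lemma card_itemPairs : (itemPairs α).card = (Fintype.card α).choose 2 := by
  have hEq : itemPairs α = Finset.powersetCard 2 Finset.univ := by
    ext x
    simp [itemPairs, Finset.mem_powersetCard]
  rw [hEq, Finset.card_powersetCard, Finset.card_univ]

end CombAux

set_option maxHeartbeats 1600000 in
/-- with the potential function
`f(T̄) = (#(T̄) − (r/(r+1))·#_B)·(1 − (r+1)/(r·m*))^(k − |T̄|)` (real exponentiation),
for every partial family `T̄ ⊆ 𝒯` with `#(T̄) > 0` there is `T ∈ 𝒯 \ T̄` with
`f(T̄ ∪ {T}) ≤ f(T̄)`. -/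
theorem stmt_7 {α : Type*} [Fintype α] [DecidableEq α]
    (r : ℕ) (hr : 1 ≤ r) (hn : 2 ≤ Fintype.card α)
    (𝒯 Fstar : Finset (Finset α)) (hFstar : IsRTestSet r 𝒯 Fstar)
    (hm : 2 ≤ Fstar.card)
    (B : ℕ) (hBdef : B = ((itemPairs α).filter fun a => diffBy a Fstar = r).card)
    (hB : 1 ≤ B)
    (N0 : ℝ)
    (hN0 : N0 = (r : ℝ) * (Fintype.card α) * ((Fintype.card α : ℝ) - 1) / 2)
    (k : ℝ)
    (hk : k = ((r : ℝ) / ((r : ℝ) + 1)) * (Fstar.card : ℝ) *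
        Real.log (((r : ℝ) + 1) * N0 / (B : ℝ)))
    (f : Finset (Finset α) → ℝ)
    (hf : ∀ Tb : Finset (Finset α),
      f Tb = ((dmeasure r Tb : ℝ) - ((r : ℝ) / ((r : ℝ) + 1)) * (B : ℝ)) *
        (1 - ((r : ℝ) + 1) / ((r : ℝ) * (Fstar.card : ℝ))) ^ (k - (Tb.card : ℝ)))
    (Tbar : Finset (Finset α)) (hTbar : Tbar ⊆ 𝒯)
    (hpos : 0 < dmeasure r Tbar) :
    ∃ T ∈ 𝒯 \ Tbar, f (insert T Tbar) ≤ f Tbar := by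
  classical
  obtain ⟨hFT, hdiff⟩ := hFstar
  have hDne : (Fstar \ Tbar).Nonempty := by
    rw [Finset.sdiff_nonempty]
    intro hsub
    have hzero : dmeasure r Tbar = 0 := by
      rw [dmeasure]
      apply Finset.sum_eq_zero
      intro a ha
      have h1 := (hdiff a ha).trans (diffBy_mono a hsub)
      omega
    omega
  set D := Fstar \ Tbar with hD
  set Pp := (itemPairs α).filter (fun a => diffBy a Tbar < r) with hPp
  set dec : Finset α → ℕ := fun T => (Pp.filter fun a => (T ∩ a).card = 1).card with hdecdef
  have hdecN : ∀ T : Finset α, T ∉ Tbar →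
      dmeasure r (insert T Tbar) + dec T = dmeasure r Tbar := by
    intro T hT
    have h1 : dec T = ∑ a ∈ itemPairs α,
        (if diffBy a Tbar < r ∧ (T ∩ a).card = 1 then 1 else 0) := by
      rw [hdecdef]
      simp only [hPp, Finset.filter_filter]
      rw [Finset.card_filter]
    rw [dmeasure, dmeasure, h1, ← Finset.sum_add_distrib]
    apply Finset.sum_congr rfl
    intro a _
    rw [diffBy_insert_eq a T Tbar hT]
    split_ifs <;> omega
  have hswap : ∑ T ∈ D, dec T = ∑ a ∈ Pp, diffBy a D := by
    calc ∑ T ∈ D, dec T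
        = ∑ T ∈ D, ∑ a ∈ Pp, (if (T ∩ a).card = 1 then 1 else 0) := by
          refine Finset.sum_congr rfl fun T _ => ?_
          simp only [hdecdef, Finset.card_filter]
      _ = ∑ a ∈ Pp, ∑ T ∈ D, (if (T ∩ a).card = 1 then 1 else 0) := Finset.sum_comm
      _ = ∑ a ∈ Pp, diffBy a D := by
          refine Finset.sum_congr rfl fun a _ => ?_
          rw [diffBy, Finset.card_filter]
  have hpair : ∀ a ∈ Pp,
      (r - diffBy a Tbar) + 1 ≤ diffBy a D + (if diffBy a Fstar = r then 1 else 0) := by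
    intro a ha
    obtain ⟨haP, halt⟩ := Finset.mem_filter.mp ha
    have hsub : Fstar ⊆ D ∪ Tbar := by
      intro x hx
      rw [hD]
      by_cases h : x ∈ Tbar
      · exact Finset.mem_union_right _ h
      · exact Finset.mem_union_left _ (Finset.mem_sdiff.mpr ⟨hx, h⟩)
    have h2 : diffBy a Fstar ≤ diffBy a D + diffBy a Tbar :=
      (diffBy_mono a hsub).trans (diffBy_union_le a D Tbar)
    have h3 : r ≤ diffBy a Fstar := hdiff a haP
    split_ifs with h4
    · omega
    · omega
  have hB1 : (Pp.filter fun a => diffBy a Fstar = r).card ≤ B := by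
    rw [hBdef]
    apply Finset.card_le_card
    intro x hx
    rw [Finset.mem_filter] at hx ⊢
    rw [hPp, Finset.mem_filter] at hx
    exact ⟨hx.1.1, hx.2⟩
  have hNP : dmeasure r Tbar = ∑ a ∈ Pp, (r - diffBy a Tbar) := by
    rw [dmeasure, ← Finset.sum_filter_add_sum_filter_not (itemPairs α)
      (fun a => diffBy a Tbar < r) (fun a => r - diffBy a Tbar)]
    have hz : ∑ a ∈ (itemPairs α).filter (fun a => ¬ diffBy a Tbar < r),
        (r - diffBy a Tbar) = 0 :=
      Finset.sum_eq_zero fun a ha => by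
        have := (Finset.mem_filter.mp ha).2; omega
    rw [hz, add_zero, hPp]
  have hclaim1 : dmeasure r Tbar + Pp.card ≤ (∑ T ∈ D, dec T) + B := by
    have h5 : ∑ a ∈ Pp, ((r - diffBy a Tbar) + 1)
        ≤ ∑ a ∈ Pp, (diffBy a D + (if diffBy a Fstar = r then 1 else 0)) :=
      Finset.sum_le_sum hpair
    rw [Finset.sum_add_distrib, Finset.sum_add_distrib, Finset.sum_const,
      smul_eq_mul, mul_one] at h5
    have h6 : ∑ a ∈ Pp, (if diffBy a Fstar = r then 1 else 0)
        = (Pp.filter fun a => diffBy a Fstar = r).card := (Finset.card_filter _ _).symm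
    rw [h6] at h5
    rw [hNP, hswap]
    omega
  have hclaim2 : dmeasure r Tbar ≤ r * Pp.card := by
    rw [hNP]
    calc ∑ a ∈ Pp, (r - diffBy a Tbar) ≤ ∑ a ∈ Pp, r :=
          Finset.sum_le_sum fun a _ => Nat.sub_le r _
      _ = r * Pp.card := by rw [Finset.sum_const, smul_eq_mul, mul_comm]
  obtain ⟨T, hTD, hTmax⟩ := Finset.exists_max_image D dec hDne
  have hS : ∑ T' ∈ D, dec T' ≤ D.card * dec T := by
    calc ∑ T' ∈ D, dec T' ≤ ∑ _T' ∈ D, dec T := Finset.sum_le_sum fun x hx => hTmax x hx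
      _ = D.card * dec T := by rw [Finset.sum_const, smul_eq_mul]
  have hDm : D.card ≤ Fstar.card := Finset.card_le_card Finset.sdiff_subset
  have hTF : T ∈ Fstar := (Finset.mem_sdiff.mp hTD).1
  have hTnT : T ∉ Tbar := (Finset.mem_sdiff.mp hTD).2
  have hNN' : dmeasure r (insert T Tbar) + dec T = dmeasure r Tbar := hdecN T hTnT
  have hkey : r * Fstar.card * dmeasure r (insert T Tbar) + (r+1) * dmeasure r Tbar
      ≤ r * Fstar.card * dmeasure r Tbar + r * B := by
    have h7 : (r+1) * dmeasure r Tbar ≤ r * (D.card * dec T) + r * B := by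
      calc (r+1)*dmeasure r Tbar = r*dmeasure r Tbar + dmeasure r Tbar := by ring
        _ ≤ r*dmeasure r Tbar + r*Pp.card := by omega
        _ = r*(dmeasure r Tbar + Pp.card) := by ring
        _ ≤ r*((∑ T' ∈ D, dec T') + B) := Nat.mul_le_mul_left r hclaim1
        _ ≤ r*(D.card * dec T + B) := Nat.mul_le_mul_left r (by omega)
        _ = r*(D.card*dec T) + r*B := by ring
    have h8 : r * (D.card * dec T) ≤ r * Fstar.card * dec T := by
      rw [mul_assoc]
      exact Nat.mul_le_mul_left r (Nat.mul_le_mul_right _ hDm)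
    calc r * Fstar.card * dmeasure r (insert T Tbar) + (r+1) * dmeasure r Tbar
        ≤ r * Fstar.card * dmeasure r (insert T Tbar)
            + (r * Fstar.card * dec T + r * B) := by omega
      _ = r * Fstar.card * (dmeasure r (insert T Tbar) + dec T) + r * B := by ring
      _ = r * Fstar.card * dmeasure r Tbar + r * B := by rw [hNN']
  -- real part
  refine ⟨T, Finset.mem_sdiff.mpr ⟨hFT hTF, hTnT⟩, ?_⟩
  rw [hf, hf, Finset.card_insert_of_notMem hTnT]
  obtain ⟨N', hgen'⟩ : ∃ x, dmeasure r (insert T Tbar) = x := ⟨_, rfl⟩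
  obtain ⟨N, hgen⟩ : ∃ x, dmeasure r Tbar = x := ⟨_, rfl⟩
  rw [hgen, hgen'] at hkey ⊢
  rw [hgen] at hpos
  clear hNN' hdecN hswap hclaim1 hclaim2 hNP hS hpair hB1 hDne hTD hTmax
  have hkeyR : (r:ℝ)*(Fstar.card:ℝ)*(N':ℝ) + ((r:ℝ)+1)*(N:ℝ)
      ≤ (r:ℝ)*(Fstar.card:ℝ)*(N:ℝ) + (r:ℝ)*(B:ℝ) := by exact_mod_cast hkey
  clear hgen hgen' hTnT hTF hDm hdiff hTbar hf hdecdef hPp hD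
  clear hFT dec Pp D f 𝒯
  push_cast
  rw [show k - ((Tbar.card:ℝ) + 1) = k - (Tbar.card:ℝ) - 1 by ring]
  set rr := (r:ℝ) with hrrdef
  set mm := (Fstar.card : ℝ) with hmmdef
  have hrr : (1:ℝ) ≤ rr := by rw [hrrdef]; exact_mod_cast hr
  have hmm : (2:ℝ) ≤ mm := by rw [hmmdef]; exact_mod_cast hm
  have hApos : (0:ℝ) < rr * mm := by nlinarith
  have hrm : rr + 1 ≤ rr * mm := by nlinarith
  set q := 1 - (rr+1)/(rr*mm) with hq
  have hq0 : 0 ≤ q := by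
    rw [hq, sub_nonneg, div_le_one hApos]
    exact hrm
  set c := rr/(rr+1) * (B:ℝ) with hc
  have hrc : (rr+1) * c = rr * (B:ℝ) := by
    rw [hc]
    field_simp
  have hAq : rr*mm*q = rr*mm - (rr+1) := by
    rw [hq]
    field_simp
  have hstep : (N':ℝ) - c ≤ q * ((N:ℝ) - c) := by
    have h10 : rr*mm*((N':ℝ) - c) ≤ rr*mm*(q*((N:ℝ)-c)) := by
      have hexpand : rr*mm*(q*((N:ℝ)-c)) = (rr*mm - (rr+1)) * ((N:ℝ)-c) := by
        rw [← hAq]; ring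
      rw [hexpand]
      nlinarith [hkeyR, hrc]
    exact le_of_mul_le_mul_left h10 hApos
  set t := (Tbar.card : ℝ) with ht
  rcases eq_or_lt_of_le hq0 with hq0' | hqpos
  · -- q = 0 : forces r = 1, Fstar.card = 2
    have hq0'' : q = 0 := hq0'.symm
    have hrm1 : rr * mm = rr + 1 := by
      have h11 : (rr+1)/(rr*mm) = 1 := by
        rw [hq] at hq0''
        linarith
      rw [div_eq_one_iff_eq (ne_of_gt hApos)] at h11
      linarith
    have hcastrm : r * Fstar.card = r + 1 := by
      have : ((r * Fstar.card : ℕ) : ℝ) = ((r + 1 : ℕ) : ℝ) := by push_cast; exact hrm1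
      exact_mod_cast this
    have h2r : 2 * r ≤ r * Fstar.card := by
      calc 2 * r = r * 2 := by ring
        _ ≤ r * Fstar.card := Nat.mul_le_mul_left r hm
    have hre : r = 1 := by omega
    have hme : Fstar.card = 2 := by
      rw [hre] at hcastrm; omega
    rw [hq0'']
    by_cases hkt : k - t = 0
    · exfalso
      have htk : k = t := by linarith
      have hnr : (2:ℝ) ≤ (Fintype.card α : ℝ) := by exact_mod_cast hn
      have hBpos : (0:ℝ) < (B:ℝ) := by exact_mod_cast hB
      have hrr1 : rr = 1 := by rw [hrrdef, hre]; norm_num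
      have hmm2 : mm = 2 := by rw [hmmdef, hme]; norm_num
      have harg : (rr+1) * N0 / (B:ℝ)
          = (Fintype.card α : ℝ) * ((Fintype.card α : ℝ)-1) / (B:ℝ) := by
        rw [hN0, hrr1]; ring
      have hargpos : (0:ℝ) < (Fintype.card α : ℝ) * ((Fintype.card α : ℝ)-1) / (B:ℝ) := by
        apply div_pos ?_ hBpos
        nlinarith
      have hkval : k = Real.log ((Fintype.card α : ℝ) * ((Fintype.card α : ℝ)-1) / (B:ℝ)) := by
        rw [hk, harg, hrr1, hmm2]
        norm_num
      have hexpk : Real.exp k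
          = (Fintype.card α : ℝ) * ((Fintype.card α : ℝ)-1) / (B:ℝ) := by
        rw [hkval, Real.exp_log hargpos]
      have hexpt : (B:ℝ) * Real.exp t
          = (Fintype.card α : ℝ) * ((Fintype.card α : ℝ)-1) := by
        rw [← htk, hexpk]
        field_simp
      have hnn : (Fintype.card α : ℝ) * ((Fintype.card α : ℝ)-1)
          = ((Fintype.card α * (Fintype.card α - 1) : ℕ) : ℝ) := by
        have hsub : ((Fintype.card α - 1 : ℕ):ℝ) = (Fintype.card α : ℝ) - 1 := by
          rw [Nat.cast_sub (by omega)]; simp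
        rw [Nat.cast_mul, hsub]
      have hprod2 : 2 ≤ Fintype.card α * (Fintype.card α - 1) := by
        calc 2 = 2 * 1 := rfl
          _ ≤ Fintype.card α * (Fintype.card α - 1) :=
            Nat.mul_le_mul hn (by omega)
      rcases Nat.eq_zero_or_pos Tbar.card with hT0 | hTpos
      · have ht0 : t = 0 := by rw [ht, hT0]; simp
        rw [ht0, Real.exp_zero, mul_one, hnn] at hexpt
        have hBeq : B = Fintype.card α * (Fintype.card α - 1) := by exact_mod_cast hexpt
        have hle : B ≤ (Fintype.card α).choose 2 := by
          rw [hBdef, ← card_itemPairs]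
          exact Finset.card_filter_le _ _
        have hch : (Fintype.card α).choose 2 < Fintype.card α * (Fintype.card α - 1) := by
          rw [Nat.choose_two_right]
          exact Nat.div_lt_self (by omega) (by omega)
        omega
      · apply HermiteAux.exp_nat_not_rat Tbar.card
          (Fintype.card α * (Fintype.card α - 1)) B hTpos hB
        rw [← ht, hexpt, hnn]
    · by_cases hkt1 : k - t - 1 = 0
      · rw [hkt1, Real.rpow_zero, Real.zero_rpow hkt, mul_one, mul_zero]
        rw [hq0''] at hstep
        linarith
      · rw [Real.zero_rpow hkt, Real.zero_rpow hkt1, mul_zero, mul_zero]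
  · -- 0 < q
    have hne : q ≠ 0 := ne_of_gt hqpos
    have hsplit : q ^ (k - t) = q ^ (k - t - 1) * q := by
      rw [← Real.rpow_add_one hne (k - t - 1), sub_add_cancel]
    rw [hsplit]
    calc ((N':ℝ)-c) * q^(k-t-1)
        ≤ (q*((N:ℝ)-c)) * q^(k-t-1) :=
          mul_le_mul_of_nonneg_right hstep (Real.rpow_nonneg hq0 _)
      _ = ((N:ℝ)-c) * (q ^ (k-t-1) * q) := by ring
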